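/- Claim 1 from the paper: In any stable model T of the program Π consisting of q(0,0) and rules q(m−1,k) → q(m,k+1) for all integers m and all 0 ≤ k < n, every atom q(i,i) with 0 ≤ i ≤ n belongs to T. -/

import Mathlib

inductive PForm (α : Type) : Type where
  | bot : PForm α
  | atom : α → PForm α
  | and : PForm α → PForm α → PForm α
  | or : PForm α → PForm α → PForm α
  | imp : PForm α → PForm α → PForm α

/-- Classical satisfaction of a formula by a set of true atoms. -/
def Cl {α : Type} (T : Set α) : PForm α → Prop
  | .bot => False
  | .atom a => a ∈ T
  | .and F G => Cl T F ∧ Cl T G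
  | .or F G => Cl T F ∨ Cl T G
  | .imp F G => Cl T F → Cl T G

/-- Here-and-there satisfaction by the HT-interpretation ⟨H,T⟩. -/
def HT {α : Type} (H T : Set α) : PForm α → Prop
  | .bot => False
  | .atom a => a ∈ H
  | .and F G => HT H T F ∧ HT H T G
  | .or F G => HT H T F ∨ HT H T G
  | .imp F G => (HT H T F → HT H T G) ∧ (Cl T F → Cl T G)

def PForm.neg {α : Type} (F : PForm α) : PForm α := .imp F .bot

/-- T is a stable (equilibrium) model of the theory Γ. -/
def Stable {α : Type} (Γ : Set (PForm α)) (T : Set α) : Prop :=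
  (∀ F ∈ Γ, Cl T F) ∧ ∀ H : Set α, H ⊂ T → ¬ (∀ F ∈ Γ, HT H T F)

/-- The property program for parameter n: the fact q(0,0) together with, for
    each 0 ≤ k < n, the rules q(m-1,k) → q(m,k+1) for every integer m. -/
def PropProg (n : ℕ) : Set (PForm (ℤ × ℤ)) :=
  {F | F = .atom (0, 0) ∨
       ∃ m k : ℤ, 0 ≤ k ∧ k < (n : ℤ) ∧
         F = .imp (.atom (m - 1, k)) (.atom (m, k + 1))}

theorem claim1 (n : ℕ) (T : Set (ℤ × ℤ)) (hT : Stable (PropProg n) T) :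
    ∀ i : ℤ, 0 ≤ i → i ≤ (n : ℤ) → (i, i) ∈ T := by
  obtain ⟨hcl, -⟩ := hT
  have base : ((0 : ℤ), (0 : ℤ)) ∈ T := hcl _ (Or.inl rfl)
  have step : ∀ j : ℤ, 0 ≤ j → j < (n : ℤ) → (j, j) ∈ T → (j + 1, j + 1) ∈ T := by
    intro j hj hjn hmem
    have hrule := hcl (.imp (.atom (j + 1 - 1, j)) (.atom (j + 1, j + 1)))
      (Or.inr ⟨j + 1, j, hj, hjn, rfl⟩)
    simpa [Cl] using hrule (by simpa [Cl] using hmem)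
  refine fun i hi =>
    Int.le_induction (motive := fun i _ => i ≤ (n : ℤ) → (i, i) ∈ T) (m := 0) (fun _ => base)
      (fun j hj ih h => step j hj (by omega) (ih (by omega))) i hi
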